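/- Let (Θ, 𝒜) be a measurable space, let π and q be probability measures on Θ with q ≪ π and KL(q ‖ π) < ∞, let m ≥ 1, and let f_1, …, f_m : Θ → ℝ be measurable functions with f_s(θ) > 0 for all θ, such that ∏_{s=1}^m f_s is integrable with respect to π and log ∘ f_s is integrable with respect to q for each s. Then log (∫_Θ ∏_{s=1}^m f_s dπ) ≥ Σ_{s=1}^m ( ∫_Θ log f_s dq − (1/m) · KL(q ‖ π) ), i.e., the log marginal likelihood is bounded below by the evidence lower bound decomposed into m per-source components. -/
import Mathlib


open MeasureTheory

/-- The federated ELBO decomposition of FedCI (Eq. (21), Appendix B): if `q ≪ π` with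
finite Kullback–Leibler divergence `KL(q‖π) = ∫ llr q π dq`, and `f_1, …, f_m` are positive
measurable functions with `∏ f_s` integrable w.r.t. `π` and each `log f_s` integrable w.r.t. `q`,
then `log ∫ ∏ f_s dπ ≥ Σ_s (∫ log f_s dq − (1/m) KL(q‖π))`. -/
theorem federated_elbo_decomposition {Θ : Type*} [MeasurableSpace Θ]
    (π q : Measure Θ) [IsProbabilityMeasure π] [IsProbabilityMeasure q]
    (hac : q ≪ π) (hkl : Integrable (llr q π) q)
    (m : ℕ) (hm : 1 ≤ m) (f : Fin m → Θ → ℝ)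
    (hmeas : ∀ s, Measurable (f s)) (hpos : ∀ s θ, 0 < f s θ)
    (hint : Integrable (fun θ => ∏ s, f s θ) π)
    (hlog : ∀ s, Integrable (fun θ => Real.log (f s θ)) q) :
    Real.log (∫ θ, ∏ s, f s θ ∂π)
      ≥ ∑ s, (∫ θ, Real.log (f s θ) ∂q - (1 / (m : ℝ)) * ∫ θ, llr q π θ ∂q) := by
  set G : Θ → ℝ := fun θ => ∑ s, Real.log (f s θ) with hG
  have hGmeas : Measurable G := by
    exact Finset.measurable_sum _ fun s _ => (hmeas s).log
  have hprod_eq : ∀ θ, ∏ s, f s θ = Real.exp (G θ) := by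
    intro θ
    rw [hG, Real.exp_sum]
    exact Finset.prod_congr rfl fun s _ => (Real.exp_log (hpos s θ)).symm
  have hintexp : Integrable (fun θ => Real.exp (G θ)) π := by
    refine hint.congr (Filter.Eventually.of_forall fun θ => ?_)
    exact hprod_eq θ
  -- Z > 0
  set Z : ℝ := ∫ θ, ∏ s, f s θ ∂π with hZ
  have hZeq : Z = ∫ θ, Real.exp (G θ) ∂π := by
    rw [hZ]; exact integral_congr_ae (Filter.Eventually.of_forall hprod_eq)
  have hZpos : 0 < Z := by
    rw [hZeq]; exact integral_exp_pos hintexp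
  -- the auxiliary function φ = exp (G - llr)
  set φ : Θ → ℝ := fun θ => Real.exp (G θ - llr q π θ) with hφ
  have hφmeas : Measurable φ := (hGmeas.sub (measurable_llr q π)).exp
  have hφnn : ∀ θ, 0 ≤ φ θ := fun θ => (Real.exp_pos _).le
  -- key change-of-measure bound on the lintegral
  have hkey : ∫⁻ θ, ENNReal.ofReal (φ θ) ∂q ≤ ENNReal.ofReal Z := by
    rw [← lintegral_rnDeriv_mul hac (by fun_prop)]
    have hZ' : ENNReal.ofReal Z = ∫⁻ θ, ENNReal.ofReal (Real.exp (G θ)) ∂π := by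
      rw [hZeq]
      exact ofReal_integral_eq_lintegral_ofReal hintexp
        (Filter.Eventually.of_forall fun θ => (Real.exp_pos _).le)
    rw [hZ']
    refine lintegral_mono_ae ?_
    filter_upwards [Measure.rnDeriv_lt_top q π] with θ hlt
    rcases eq_or_ne (q.rnDeriv π θ) 0 with h0 | h0
    · simp [h0]
    · have ht : 0 < (q.rnDeriv π θ).toReal :=
        ENNReal.toReal_pos h0 hlt.ne
      have hllr : llr q π θ = Real.log (q.rnDeriv π θ).toReal := rfl
      have : φ θ = Real.exp (G θ) / (q.rnDeriv π θ).toReal := by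
        rw [hφ]
        simp only [Real.exp_sub, hllr, Real.exp_log ht]
      refine le_of_eq ?_
      calc q.rnDeriv π θ * ENNReal.ofReal (φ θ)
          = ENNReal.ofReal ((q.rnDeriv π θ).toReal)
            * ENNReal.ofReal (Real.exp (G θ) / (q.rnDeriv π θ).toReal) := by
            rw [ENNReal.ofReal_toReal hlt.ne, this]
        _ = ENNReal.ofReal ((q.rnDeriv π θ).toReal
            * (Real.exp (G θ) / (q.rnDeriv π θ).toReal)) :=
            (ENNReal.ofReal_mul ENNReal.toReal_nonneg).symm
        _ = ENNReal.ofReal (Real.exp (G θ)) := by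
            rw [mul_comm, div_mul_cancel₀ _ ht.ne']
  -- φ is integrable w.r.t. q with integral at most Z
  have hφint : Integrable φ q := by
    refine ⟨hφmeas.aestronglyMeasurable, ?_⟩
    rw [hasFiniteIntegral_iff_ofReal (Filter.Eventually.of_forall hφnn)]
    exact lt_of_le_of_lt hkey ENNReal.ofReal_lt_top
  have hφle : ∫ θ, φ θ ∂q ≤ Z := by
    have : ENNReal.ofReal (∫ θ, φ θ ∂q) ≤ ENNReal.ofReal Z :=
      (ofReal_integral_eq_lintegral_ofReal hφint
        (Filter.Eventually.of_forall hφnn)) ▸ hkey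
    exact (ENNReal.ofReal_le_ofReal_iff hZpos.le).mp this
  -- integrability of G w.r.t. q
  have hGint : Integrable G q := integrable_finset_sum _ fun s _ => hlog s
  -- pointwise: G - llr - log Z ≤ φ / Z - 1
  have hpt : ∀ θ, G θ - llr q π θ - Real.log Z ≤ φ θ / Z - 1 := by
    intro θ
    have h1 : G θ - llr q π θ - Real.log Z + 1
        ≤ Real.exp (G θ - llr q π θ - Real.log Z) := Real.add_one_le_exp _
    have h2 : Real.exp (G θ - llr q π θ - Real.log Z) = φ θ / Z := by
      rw [Real.exp_sub, Real.exp_log hZpos, hφ]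
    linarith [h1, h2 ▸ h1]
  -- integrate
  have hmain : ∫ θ, G θ ∂q - ∫ θ, llr q π θ ∂q - Real.log Z ≤ 0 := by
    have h1 : Integrable (fun θ => G θ - llr q π θ) q := hGint.sub hkl
    have hL : Integrable (fun θ => G θ - llr q π θ - Real.log Z) q :=
      h1.sub (integrable_const _)
    have hR : Integrable (fun θ => φ θ / Z - 1) q :=
      (hφint.div_const Z).sub (integrable_const 1)
    have h := integral_mono hL hR (fun θ => hpt θ)
    have hLval : ∫ θ, (G θ - llr q π θ - Real.log Z) ∂q
        = ∫ θ, G θ ∂q - ∫ θ, llr q π θ ∂q - Real.log Z := by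
      rw [integral_sub h1 (integrable_const _),
        integral_sub hGint hkl, integral_const]
      simp
    have hRval : ∫ θ, (φ θ / Z - 1) ∂q = (∫ θ, φ θ ∂q) / Z - 1 := by
      rw [integral_sub (hφint.div_const Z) (integrable_const 1),
        integral_div, integral_const]
      simp
    rw [hLval, hRval] at h
    have : (∫ θ, φ θ ∂q) / Z ≤ 1 := by
      rw [div_le_one hZpos]; exact hφle
    linarith
  -- assemble
  have hGq : ∫ θ, G θ ∂q = ∑ s, ∫ θ, Real.log (f s θ) ∂q := by
    rw [hG]; exact integral_finset_sum _ fun s _ => hlog s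
  have hsum : ∑ s, (∫ θ, Real.log (f s θ) ∂q - (1 / (m : ℝ)) * ∫ θ, llr q π θ ∂q)
      = ∫ θ, G θ ∂q - ∫ θ, llr q π θ ∂q := by
    rw [Finset.sum_sub_distrib, hGq, Finset.sum_const, Finset.card_univ,
      Fintype.card_fin, nsmul_eq_mul]
    have hm' : (m : ℝ) ≠ 0 := Nat.cast_ne_zero.mpr (by omega)
    field_simp
  rw [ge_iff_le, hsum]
  linarith
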